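/- Let A be a K-algebra without zero-divisors. Then A is left algebraically amenable if and only if it is properly left algebraically amenable. -/

import Mathlib

open Module Submodule

section Aux
variable {K A : Type*} [Field K] [AddCommGroup A] [Module K A]

lemma aux_finrank_sup_le (s t : Submodule K A) [FiniteDimensional K s] [FiniteDimensional K t] :
    finrank K ↥(s ⊔ t) ≤ finrank K ↥s + finrank K ↥t := by
  rw [← Submodule.finrank_sup_add_finrank_inf_eq s t]
  exact Nat.le_add_right _ _

lemma aux_codim (f : A →ₗ[K] A) (W : Submodule K A) [FiniteDimensional K W] :
    2 * finrank K ↥W ≤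
      finrank K ↥(W.map f ⊔ W) + finrank K ↥(Submodule.comap (f.comp W.subtype) W) := by
  haveI : Module.Finite K ↥(W.map f) := Module.Finite.map W f
  haveI : FiniteDimensional K ↥(W.map f ⊔ W) := Submodule.finiteDimensional_sup _ _
  set g : ↥W →ₗ[K] A ⧸ W := W.mkQ.comp (f.comp W.subtype) with hg
  set g2 : ↥(W.map f ⊔ W) →ₗ[K] A ⧸ W := W.mkQ.comp (W.map f ⊔ W).subtype with hg2
  have h1 := LinearMap.finrank_range_add_finrank_ker g
  have h2 := LinearMap.finrank_range_add_finrank_ker g2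
  have hker : LinearMap.ker g = Submodule.comap (f.comp W.subtype) W := by
    rw [hg, LinearMap.ker_comp, Submodule.ker_mkQ]
  have hker2 : finrank K ↥(LinearMap.ker g2) = finrank K ↥W := by
    rw [hg2, LinearMap.ker_comp, Submodule.ker_mkQ]
    exact (Submodule.comapSubtypeEquivOfLe (le_sup_right : W ≤ W.map f ⊔ W)).finrank_eq
  have hle : LinearMap.range g ≤ LinearMap.range g2 := by
    rw [hg, hg2, LinearMap.range_comp, LinearMap.range_comp, LinearMap.range_comp,
      Submodule.range_subtype, Submodule.range_subtype]
    exact Submodule.map_mono le_sup_left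
  haveI : Module.Finite K ↥(LinearMap.range g2) := LinearMap.finiteDimensional_range g2
  have hrle : finrank K ↥(LinearMap.range g) ≤ finrank K ↥(LinearMap.range g2) :=
    Submodule.finrank_mono hle
  rw [hker] at h1
  rw [hker2] at h2
  omega

lemma aux_inf {ι : Type*} [FiniteDimensional K A] (s : Finset ι) (U : ι → Submodule K A) :
    finrank K A ≤ finrank K ↥(⨅ i ∈ s, U i) + ∑ i ∈ s, (finrank K A - finrank K ↥(U i)) := by
  classical
  induction s using Finset.induction_on with
  | empty =>
      have : (⨅ i ∈ (∅ : Finset ι), U i) = ⊤ := by simp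
      rw [this, finrank_top]
      simp
  | @insert a s ha ih =>
    rw [Finset.iInf_insert, Finset.sum_insert ha]
    have key := Submodule.finrank_sup_add_finrank_inf_eq (U a) (⨅ i ∈ s, U i)
    have h1 : finrank K ↥(U a ⊔ ⨅ i ∈ s, U i) ≤ finrank K A := Submodule.finrank_le _
    have h2 : finrank K ↥(U a) ≤ finrank K A := Submodule.finrank_le _
    have h3 : finrank K ↥(⨅ i ∈ s, U i) ≤ finrank K A := Submodule.finrank_le _
    omega

end Aux

/-- `W` is a left `(F, ε)`-Følner subspace: a nonzero finite-dimensional subspace with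
`dim(aW + W) ≤ (1+ε)·dim W` for all `a ∈ F`. -/
def IsFolnerSubspace (K : Type*) {A : Type*} [Field K] [NonUnitalRing A] [Module K A]
    [SMulCommClass K A A] [IsScalarTower K A A]
    (F : Finset A) (ε : ℝ) (W : Submodule K A) : Prop :=
  W ≠ ⊥ ∧ FiniteDimensional K W ∧
    ∀ a ∈ F, (Module.finrank K ↥(W.map (LinearMap.mulLeft K a) ⊔ W) : ℝ) ≤
      (1 + ε) * (Module.finrank K ↥W : ℝ)

/-- Left algebraic amenability. -/
def AlgAmenable (K A : Type*) [Field K] [NonUnitalRing A] [Module K A]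
    [SMulCommClass K A A] [IsScalarTower K A A] : Prop :=
  ∀ ε > (0:ℝ), ∀ F : Finset A, ∃ W : Submodule K A, IsFolnerSubspace K F ε W

/-- Proper left algebraic amenability. -/
def ProperlyAlgAmenable (K A : Type*) [Field K] [NonUnitalRing A] [Module K A]
    [SMulCommClass K A A] [IsScalarTower K A A] : Prop :=
  ∀ ε > (0:ℝ), ∀ F : Finset A, ∃ W : Submodule K A,
    IsFolnerSubspace K F ε W ∧ ∀ a ∈ F, a ∈ W

set_option maxHeartbeats 1000000 in
theorem stmt13 {K A : Type*} [Field K] [NonUnitalRing A] [Module K A]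
    [SMulCommClass K A A] [IsScalarTower K A A]
    (hnzd : ∀ a b : A, a * b = 0 → a = 0 ∨ b = 0) :
    AlgAmenable K A ↔ ProperlyAlgAmenable K A := by
  classical
  constructor
  · intro hAm ε hε F
    by_cases hfd : FiniteDimensional K A
    · -- finite-dimensional case: take W = ⊤
      obtain ⟨W0, hW0ne, _, _⟩ := hAm 1 one_pos ∅
      obtain ⟨x, -, hx0⟩ := Submodule.exists_mem_ne_zero_of_ne_bot hW0ne
      haveI : Nontrivial A := ⟨⟨x, 0, hx0⟩⟩
      refine ⟨⊤, ⟨?_, inferInstance, ?_⟩, fun a _ => trivial⟩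
      · exact (bot_lt_top (α := Submodule K A)).ne'
      · intro a _
        have htop : (⊤ : Submodule K A).map (LinearMap.mulLeft K a) ⊔ ⊤ = ⊤ := by simp
        rw [htop]
        nlinarith [Nat.cast_nonneg (α := ℝ) (finrank K ↥(⊤ : Submodule K A))]
    · -- infinite-dimensional case
      set m : ℕ := F.card with hm
      set n : ℕ := Nat.ceil (4 * (m : ℝ) / ε) + 1 with hn
      have hn0 : 0 < n := Nat.succ_pos _
      have hrank : (n : Cardinal) ≤ Module.rank K A := by
        have hfd' : ¬ Module.Finite K A := hfd
        rw [← Module.rank_lt_aleph0_iff] at hfd'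
        exact le_of_lt ((Cardinal.nat_lt_aleph0 n).trans_le (not_lt.mp hfd'))
      obtain ⟨c, hc⟩ := exists_linearIndependent_of_le_rank hrank
      set ε' : ℝ := min (ε / 2) (1 / (2 * n)) with hε'def
      have hε'pos : 0 < ε' := lt_min (by linarith) (by positivity)
      set F' : Finset A := F ∪ Finset.image c Finset.univ with hF'
      obtain ⟨W, hWne, hWfd, hWfol⟩ := hAm ε' hε'pos F'
      haveI := hWfd
      set d : ℕ := finrank K ↥W with hd
      haveI : Nontrivial ↥W := Submodule.nontrivial_iff_ne_bot.mpr hWne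
      have hd1 : 1 ≤ d := Module.finrank_pos
      -- Step A : n ≤ d
      have hstepA : n ≤ d := by
        set U : Fin n → Submodule K ↥W := fun i =>
          Submodule.comap ((LinearMap.mulLeft K (c i)).comp W.subtype) W with hU
        have hcmem : ∀ i : Fin n, c i ∈ F' := fun i =>
          Finset.mem_union_right _ (Finset.mem_image_of_mem c (Finset.mem_univ i))
        have hUcodim : ∀ i : Fin n, ((d : ℝ) - finrank K ↥(U i)) ≤ ε' * d := by
          intro i
          have h1 := aux_codim (LinearMap.mulLeft K (c i)) W
          have h2 := hWfol (c i) (hcmem i)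
          rw [one_add_mul] at h2
          have h1' : 2 * (d : ℝ) ≤
              (finrank K ↥(W.map (LinearMap.mulLeft K (c i)) ⊔ W) : ℝ) + finrank K ↥(U i) := by
            exact_mod_cast h1
          linarith
        have hUle : ∀ i : Fin n, finrank K ↥(U i) ≤ d := fun i => Submodule.finrank_le _
        have hint := aux_inf (K := K) (A := ↥W) Finset.univ U
        have hsum : ((∑ i ∈ Finset.univ, (d - finrank K ↥(U i)) : ℕ) : ℝ) ≤ (n : ℝ) * (ε' * d) := by
          calc ((∑ i ∈ Finset.univ, (d - finrank K ↥(U i)) : ℕ) : ℝ)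
              = ∑ i : Fin n, ((d - finrank K ↥(U i) : ℕ) : ℝ) := by rw [Nat.cast_sum]
            _ ≤ ∑ _i : Fin n, (ε' * d) := Finset.sum_le_sum (fun i _ => by
                  rw [Nat.cast_sub (hUle i)]; exact hUcodim i)
            _ = (n : ℝ) * (ε' * d) := by
                  rw [Finset.sum_const, Finset.card_univ, Fintype.card_fin, nsmul_eq_mul]
        have hεn : ε' ≤ 1 / (2 * n) := min_le_right _ _
        have hnR : (0:ℝ) < (n : ℝ) := by exact_mod_cast hn0
        have hhalf : (n : ℝ) * (ε' * d) ≤ (d : ℝ) / 2 := by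
          have h1 : ε' * d ≤ (1 / (2 * n)) * d :=
            mul_le_mul_of_nonneg_right hεn (Nat.cast_nonneg d)
          calc (n : ℝ) * (ε' * d) ≤ (n : ℝ) * ((1 / (2 * n)) * d) := by nlinarith
            _ = (d : ℝ) / 2 := by
                  have hne : (n : ℝ) ≠ 0 := ne_of_gt hnR
                  field_simp
        have hintR : (d : ℝ) ≤ (finrank K ↥(⨅ i ∈ Finset.univ, U i) : ℝ) + (d : ℝ) / 2 := by
          have h' : (d : ℝ) ≤ (finrank K ↥(⨅ i ∈ Finset.univ, U i) : ℝ) +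
              ((∑ i ∈ Finset.univ, (d - finrank K ↥(U i)) : ℕ) : ℝ) := by exact_mod_cast hint
          linarith
        have hTne : (⨅ i ∈ Finset.univ, U i) ≠ ⊥ := by
          intro hbot
          rw [hbot, finrank_bot] at hintR
          have hdR : (1 : ℝ) ≤ (d : ℝ) := by exact_mod_cast hd1
          norm_num at hintR
          linarith
        obtain ⟨x, hxT, hx0⟩ := Submodule.exists_mem_ne_zero_of_ne_bot hTne
        simp only [Submodule.mem_iInf] at hxT
        have hx : ∀ i : Fin n, c i * (x : A) ∈ W := by
          intro i
          have h := hxT i (Finset.mem_univ i)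
          simpa [hU, Submodule.mem_comap] using h
        have hxA : (x : A) ≠ 0 := fun h => hx0 (Subtype.ext h)
        have hkerx : LinearMap.ker (LinearMap.mulRight K (x : A)) = ⊥ := by
          rw [LinearMap.ker_eq_bot']
          intro a ha
          have h0 : a * (x : A) = 0 := by simpa using ha
          exact (hnzd a x h0).resolve_right hxA
        have hlin : LinearIndependent K (fun i : Fin n => c i * (x : A)) := by
          have h := hc.map' (LinearMap.mulRight K (x : A)) hkerx
          simpa [Function.comp_def, LinearMap.mulRight_apply] using h
        have hlin' : LinearIndependent K (fun i : Fin n => (⟨c i * (x : A), hx i⟩ : ↥W)) := by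
          apply LinearIndependent.of_comp W.subtype
          exact hlin
        have hcard := hlin'.fintype_card_le_finrank
        simpa using hcard
      -- Step B
      set S : Submodule K A := Submodule.span K (F : Set A) with hS
      haveI : FiniteDimensional K S := FiniteDimensional.span_of_finite K F.finite_toSet
      set W' : Submodule K A := W ⊔ S with hW'
      haveI : FiniteDimensional K W' := Submodule.finiteDimensional_sup _ _
      refine ⟨W', ⟨?_, inferInstance, ?_⟩, fun a ha => Submodule.mem_sup_right (Submodule.subset_span ha)⟩
      · intro h
        exact hWne (eq_bot_iff.mpr (le_sup_left.trans_eq h))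
      · intro a haF
        have hfa := hWfol a (Finset.mem_union_left _ haF)
        rw [one_add_mul] at hfa
        set fa := LinearMap.mulLeft K a with hfadef
        haveI : Module.Finite K ↥(W.map fa) := Module.Finite.map W fa
        haveI : Module.Finite K ↥(S.map fa) := Module.Finite.map S fa
        haveI : FiniteDimensional K ↥(W.map fa ⊔ W) := Submodule.finiteDimensional_sup _ _
        haveI : FiniteDimensional K ↥(S.map fa ⊔ S) := Submodule.finiteDimensional_sup _ _
        have hsplit : W'.map fa ⊔ W' = (W.map fa ⊔ W) ⊔ (S.map fa ⊔ S) := by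
          rw [hW', Submodule.map_sup]
          exact sup_sup_sup_comm _ _ _ _
        have hSm : finrank K ↥S ≤ m := finrank_span_finset_le_card F
        have hSmap : finrank K ↥(S.map fa) ≤ m := le_trans (Submodule.finrank_map_le fa S) hSm
        have k1 : finrank K ↥(W'.map fa ⊔ W') ≤ finrank K ↥(W.map fa ⊔ W) + 2 * m := by
          rw [hsplit]
          calc finrank K ↥((W.map fa ⊔ W) ⊔ (S.map fa ⊔ S))
              ≤ finrank K ↥(W.map fa ⊔ W) + finrank K ↥(S.map fa ⊔ S) := aux_finrank_sup_le _ _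
            _ ≤ finrank K ↥(W.map fa ⊔ W) + (finrank K ↥(S.map fa) + finrank K ↥S) := by
                have := aux_finrank_sup_le (S.map fa) S
                omega
            _ ≤ finrank K ↥(W.map fa ⊔ W) + 2 * m := by omega
        have k4 : (d : ℝ) ≤ (finrank K ↥W' : ℝ) := by
          exact_mod_cast Submodule.finrank_mono (le_sup_left : W ≤ W')
        have k5 : 4 * (m : ℝ) ≤ ε * d := by
          have h1 : 4 * (m : ℝ) / ε ≤ (n : ℝ) := by
            calc 4 * (m : ℝ) / ε ≤ (⌈4 * (m : ℝ) / ε⌉₊ : ℝ) := Nat.le_ceil _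
              _ ≤ (n : ℝ) := by
                  have hcl : (⌈4 * (m : ℝ) / ε⌉₊ : ℕ) ≤ n := Nat.le_succ _
                  exact_mod_cast hcl
          have h2 : (n : ℝ) ≤ (d : ℝ) := by exact_mod_cast hstepA
          rw [div_le_iff₀ hε] at h1
          nlinarith
        have k3 : ε' ≤ ε / 2 := min_le_left _ _
        have k1R : (finrank K ↥(W'.map fa ⊔ W') : ℝ) ≤ (finrank K ↥(W.map fa ⊔ W) : ℝ) + 2 * m := by
          exact_mod_cast k1
        have e1 : ε' * (d : ℝ) ≤ ε / 2 * d := mul_le_mul_of_nonneg_right k3 (Nat.cast_nonneg d)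
        have e3 : (1 + ε) * (d : ℝ) ≤ (1 + ε) * (finrank K ↥W' : ℝ) :=
          mul_le_mul_of_nonneg_left k4 (by linarith)
        have e4 : (1 + ε) * (d : ℝ) = d + ε / 2 * d + ε / 2 * d := by ring
        have e2 : 2 * (m : ℝ) ≤ ε / 2 * d := by nlinarith
        linarith [hfa]
  · intro hPr ε hε F
    obtain ⟨W, h, -⟩ := hPr ε hε F
    exact ⟨W, h⟩
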